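/- For every set of points P ⊆ 𝔽_q^(m+1) and every set L ⊆ V_{m,r} of m-variate polynomials of degree at most r, I(P,L) ≤ |L| + q^(dim V_{m,r}/2 − 1)·|P|·|L|^(1/2). -/

import Mathlib

open Finset

set_option linter.unusedSectionVars false


noncomputable def degS (m r : ℕ) : Finset (Fin m →₀ ℕ) :=
  (Finset.Iic (Finsupp.equivFunOnFinite.symm fun _ : Fin m => r)).filter
    fun d => (d.sum fun _ e => e) ≤ r

lemma apply_le_sum {m : ℕ} (d : Fin m →₀ ℕ) (i : Fin m) : d i ≤ d.sum fun _ e => e := by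
  by_cases h : i ∈ d.support
  · exact Finset.single_le_sum (fun _ _ => Nat.zero_le _) h
  · simp [Finsupp.notMem_support_iff.mp h]

lemma mem_degS {m r : ℕ} {d : Fin m →₀ ℕ} : d ∈ degS m r ↔ (d.sum fun _ e => e) ≤ r := by
  simp only [degS, Finset.mem_filter, Finset.mem_Iic, and_iff_right_iff_imp]
  intro h i
  simpa using le_trans (apply_le_sum d i) h

lemma degS_card {m r : ℕ} : (degS m r).card ≤ (m + r).choose r := by
  classical
  set pad : (Fin m →₀ ℕ) → Multiset (Fin (m+1)) := fun d =>
    (d.embDomain (Fin.castSuccEmb)).toMultiset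
      + Multiset.replicate (r - d.sum fun _ e => e) (Fin.last m) with hpaddef
  have hpad : ∀ d ∈ degS m r, Multiset.card (pad d) = r := by
    intro d hd
    rw [hpaddef]
    simp only [Multiset.card_add, Multiset.card_replicate, Finsupp.card_toMultiset,
      Finsupp.sum_embDomain]
    have := mem_degS.mp hd
    simp only [Finsupp.sum, id_eq] at *
    omega
  have hcount : ∀ (d : Fin m →₀ ℕ) (i : Fin m),
      Multiset.count (Fin.castSucc i) (pad d) = d i := by
    intro d i
    rw [hpaddef]
    simp only [Multiset.count_add, Finsupp.count_toMultiset, Multiset.count_replicate]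
    have h1 : (Fin.castSucc i) ≠ Fin.last m := (Fin.castSucc_lt_last i).ne
    have h2 : d.embDomain Fin.castSuccEmb (Fin.castSucc i) = d i :=
      Finsupp.embDomain_apply_self _ _ _
    simp [h1.symm, h2]
  have hinj : Set.InjOn pad (degS m r) := by
    intro d _ d' _ h
    ext i
    rw [← hcount d i, ← hcount d' i, h]
  have hmaps : ∀ d ∈ degS m r,
      pad d ∈ (Finset.univ : Finset (Sym (Fin (m+1)) r)).image Sym.toMultiset := by
    intro d hd
    exact Finset.mem_image.mpr ⟨⟨pad d, hpad d hd⟩, Finset.mem_univ _, rfl⟩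
  calc (degS m r).card ≤ ((Finset.univ : Finset (Sym (Fin (m+1)) r)).image Sym.toMultiset).card :=
        Finset.card_le_card_of_injOn pad hmaps hinj
    _ ≤ (Finset.univ : Finset (Sym (Fin (m+1)) r)).card := Finset.card_image_le
    _ = (m + r).choose r := by
        rw [Finset.card_univ, Sym.card_sym_eq_choose]
        congr 1
        simp

lemma fiber_card {G H : Type*} [AddCommGroup G] [AddCommGroup H] [Fintype G] [Fintype H]
    [DecidableEq H] (Φ : G →+ H) (hs : Function.Surjective Φ) (y : H) :
    (Finset.univ.filter fun g => Φ g = y).card * Fintype.card H = Fintype.card G := by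
  classical
  have hcards : ∀ y' : H, (univ.filter fun g => Φ g = y').card
      = (univ.filter fun g => Φ g = y).card := by
    intro y'
    obtain ⟨g0, hg0⟩ := hs y
    obtain ⟨g1, hg1⟩ := hs y'
    apply Finset.card_bij (fun g _ => g + (g0 - g1))
    · intro g hg
      simp only [mem_filter, mem_univ, true_and] at hg ⊢
      rw [map_add, map_sub, hg, hg0, hg1]
      abel
    · intro g _ g' _ h
      exact add_right_cancel h
    · intro gy hgy
      refine ⟨gy - (g0 - g1), ?_, by abel⟩
      simp only [mem_filter, mem_univ, true_and] at hgy ⊢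
      rw [map_sub, map_sub, hgy, hg0, hg1]
      abel
  have h1 : Fintype.card G = ∑ y' : H, (univ.filter fun g => Φ g = y').card := by
    rw [← card_univ]
    exact Finset.card_eq_sum_card_fiberwise (fun x _ => mem_univ _)
  rw [h1]
  simp only [hcards]
  rw [Finset.sum_const, card_univ, smul_eq_mul, mul_comm]

variable {F : Type} [Field F] [Fintype F] [DecidableEq F]

noncomputable def monval {m : ℕ} (x : Fin m → F) (d : Fin m →₀ ℕ) : F := ∏ j, x j ^ d j

noncomputable def phiHom (m r : ℕ) (a b : Fin m → F) :
    ({d // d ∈ degS m r} → F) →+ F × F :=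
  AddMonoidHom.mk' (fun g => (∑ d : {d // d ∈ degS m r}, g d * monval a d.1,
      ∑ d : {d // d ∈ degS m r}, g d * monval b d.1)) (by
    intro g h
    simp [Prod.ext_iff, add_mul, Finset.sum_add_distrib])

lemma monval_zero {m : ℕ} (x : Fin m → F) : monval x 0 = 1 := by
  simp [monval]

lemma monval_single {m : ℕ} (x : Fin m → F) (i : Fin m) :
    monval x (Finsupp.single i 1) = x i := by
  simp only [monval, Finsupp.single_apply]
  rw [Finset.prod_eq_single i] <;> simp +contextual [Ne, eq_comm]

lemma phi_surj {m r : ℕ} (hr : 1 ≤ r) (a b : Fin m → F) (i : Fin m) (hab : a i ≠ b i) :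
    Function.Surjective (phiHom m r a b) := by
  classical
  intro y
  have mem0 : (0 : Fin m →₀ ℕ) ∈ degS m r := mem_degS.mpr (by simp)
  have mem1 : (Finsupp.single i 1) ∈ degS m r := mem_degS.mpr (by
    rw [Finsupp.sum_single_index] <;> simp [hr])
  set D0 : {d // d ∈ degS m r} := ⟨0, mem0⟩
  set D1 : {d // d ∈ degS m r} := ⟨Finsupp.single i 1, mem1⟩
  have hD : D0 ≠ D1 := by
    simp only [D0, D1, Ne, Subtype.mk_eq_mk]
    intro h
    have := congrFun (congrArg (fun f : Fin m →₀ ℕ => (f : Fin m → ℕ)) h) i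
    simp at this
  set β := (y.1 - y.2) / (a i - b i) with hβ
  set α := y.1 - β * a i with hα
  set g : {d // d ∈ degS m r} → F := fun d => if d = D0 then α else if d = D1 then β else 0
    with hg
  refine ⟨g, ?_⟩
  have hsum : ∀ x : Fin m → F, ∑ d : {d // d ∈ degS m r}, g d * monval x d.1
      = α + β * x i := by
    intro x
    have : ∀ d : {d // d ∈ degS m r}, g d * monval x d.1
        = (if d = D0 then α * monval x d.1 else 0)
          + (if d = D1 then β * monval x d.1 else 0) := by
      intro d
      rcases eq_or_ne d D0 with h | h <;> rcases eq_or_ne d D1 with h' | h'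
      · exact absurd (h ▸ h') hD
      · simp [hg, h, h', hD, Ne.symm hD]
      · simp [hg, h, h', hD, Ne.symm hD]
      · simp [hg, h, h']
    rw [Finset.sum_congr rfl fun d _ => this d, Finset.sum_add_distrib,
      Finset.sum_ite_eq' _ D0, Finset.sum_ite_eq' _ D1]
    simp [D0, D1, monval_zero, monval_single]
  have hne : a i - b i ≠ 0 := sub_ne_zero.mpr hab
  have e1 : α + β * a i = y.1 := by rw [hα]; ring
  have e2 : α + β * b i = y.2 := by
    rw [hα, hβ]
    field_simp
    ring
  show (∑ d : {d // d ∈ degS m r}, g d * monval a d.1,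
      ∑ d : {d // d ∈ degS m r}, g d * monval b d.1) = y
  rw [hsum a, hsum b, e1, e2]

lemma eval_eq_sum_degS {m r : ℕ} (f : MvPolynomial (Fin m) F) (hf : f.totalDegree ≤ r)
    (x : Fin m → F) :
    MvPolynomial.eval x f = ∑ d : {d // d ∈ degS m r}, f.coeff d.1 * monval x d.1 := by
  classical
  have h1 : ∑ d ∈ f.support, (fun d => f.coeff d * monval x d) d
      = ∑ d ∈ degS m r, (fun d => f.coeff d * monval x d) d := by
    refine Finset.sum_subset ?_ ?_
    · intro d hd
      exact mem_degS.mpr (le_trans (MvPolynomial.le_totalDegree hd) hf)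
    · intro d _ hd
      simp only [MvPolynomial.notMem_support_iff.mp hd, zero_mul]
  rw [MvPolynomial.eval_eq']
  exact h1.trans (Finset.sum_attach (degS m r) fun d => f.coeff d * monval x d).symm

lemma pair_bound {m r : ℕ} (hr : 1 ≤ r) (L : Finset (MvPolynomial (Fin m) F))
    (hL : ∀ f ∈ L, f.totalDegree ≤ r) (v v' : Fin (m+1) → F) (hvv : v ≠ v') :
    (L.filter fun f => (MvPolynomial.eval (fun j : Fin m => v j.castSucc) f = v (Fin.last m))
        ∧ (MvPolynomial.eval (fun j : Fin m => v' j.castSucc) f = v' (Fin.last m))).card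
      * (Fintype.card F)^2 ≤ (Fintype.card F) ^ ((m + r).choose r) := by
  classical
  set a : Fin m → F := fun j => v j.castSucc with ha
  set b : Fin m → F := fun j => v' j.castSucc with hb
  by_cases hab : a = b
  · have hempty : (L.filter fun f =>
        (MvPolynomial.eval a f = v (Fin.last m)) ∧
        (MvPolynomial.eval b f = v' (Fin.last m))) = ∅ := by
      rw [Finset.filter_eq_empty_iff]
      rintro f _ ⟨h1, h2⟩
      apply hvv
      funext k
      induction k using Fin.lastCases with
      | last => rw [← h1, ← h2, hab]
      | cast j => exact congrFun hab j
    rw [hempty]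
    simp [Nat.zero_le]
  · obtain ⟨i, hi⟩ := Function.ne_iff.mp hab
    set y : F × F := (v (Fin.last m), v' (Fin.last m)) with hy
    have hmaps : ∀ f ∈ (L.filter fun f =>
        (MvPolynomial.eval a f = v (Fin.last m)) ∧
        (MvPolynomial.eval b f = v' (Fin.last m))),
        (fun d : {d // d ∈ degS m r} => f.coeff d.1) ∈
          (Finset.univ.filter fun g => phiHom m r a b g = y) := by
      intro f hf
      rw [Finset.mem_filter] at hf ⊢
      obtain ⟨hfL, h1, h2⟩ := hf
      refine ⟨Finset.mem_univ _, ?_⟩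
      show (∑ d : {d // d ∈ degS m r}, f.coeff d.1 * monval a d.1,
        ∑ d : {d // d ∈ degS m r}, f.coeff d.1 * monval b d.1) = y
      rw [← eval_eq_sum_degS f (hL f hfL) a, ← eval_eq_sum_degS f (hL f hfL) b, h1, h2]
    have hinj : Set.InjOn (fun f : MvPolynomial (Fin m) F =>
        (fun d : {d // d ∈ degS m r} => f.coeff d.1))
        (L.filter fun f => (MvPolynomial.eval a f = v (Fin.last m)) ∧
          (MvPolynomial.eval b f = v' (Fin.last m))) := by
      intro f hf f' hf' h
      rw [Finset.coe_filter] at hf hf'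
      have hfd : f.totalDegree ≤ r := hL f hf.1
      have hfd' : f'.totalDegree ≤ r := hL f' hf'.1
      ext d
      by_cases hd : (d.sum fun _ e => e) ≤ r
      · exact congrFun h ⟨d, mem_degS.mpr hd⟩
      · rw [MvPolynomial.coeff_eq_zero_of_totalDegree_lt
          (lt_of_le_of_lt hfd (by simpa [Finsupp.sum] using Nat.lt_of_not_le hd)),
          MvPolynomial.coeff_eq_zero_of_totalDegree_lt
          (lt_of_le_of_lt hfd' (by simpa [Finsupp.sum] using Nat.lt_of_not_le hd))]
    have hcard := Finset.card_le_card_of_injOn _ hmaps hinj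
    have hfib := fiber_card (phiHom m r a b) (phi_surj hr a b i hi) y
    calc (L.filter fun f => (MvPolynomial.eval a f = v (Fin.last m)) ∧
          (MvPolynomial.eval b f = v' (Fin.last m))).card * (Fintype.card F)^2
        ≤ (Finset.univ.filter fun g => phiHom m r a b g = y).card * (Fintype.card F)^2 :=
          Nat.mul_le_mul_right _ hcard
      _ = (Fintype.card F) ^ (degS m r).card := by
          have h2 : (Fintype.card F)^2 = Fintype.card (F × F) := by
            rw [Fintype.card_prod]; ring
          have h3 : Fintype.card ({d // d ∈ degS m r} → F)
              = Fintype.card F ^ (degS m r).card := by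
            rw [Fintype.card_fun, Fintype.card_coe]
          rw [h2, hfib, h3]
      _ ≤ (Fintype.card F) ^ ((m + r).choose r) :=
          Nat.pow_le_pow_right Fintype.card_pos degS_card


/-- Dual Cauchy–Schwarz point–polynomial incidence bound:
`I(P,L) ≤ |L| + q^(dim V_{m,r}/2 − 1)·|P|·|L|^(1/2)` with `dim V_{m,r} = C(m+r,r)`. -/
theorem stmt19 {m r : ℕ} {F : Type} [Field F] [Fintype F] [DecidableEq F] (hr : 1 ≤ r)
    (P : Finset (Fin (m + 1) → F)) (L : Finset (MvPolynomial (Fin m) F))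
    (hL : ∀ f ∈ L, f.totalDegree ≤ r) :
    ((∑ v ∈ P, (L.filter fun f =>
        MvPolynomial.eval (fun j : Fin m => v j.castSucc) f = v (Fin.last m)).card : ℕ) : ℝ) ≤
      (L.card : ℝ) +
        (Fintype.card F : ℝ) ^ (((m + r).choose r : ℝ) / 2 - 1) * (P.card : ℝ) *
          Real.sqrt (L.card : ℝ) := by
  classical
  set n := (m + r).choose r with hn
  set q := Fintype.card F with hq
  have hq1 : 1 < q := Fintype.one_lt_card
  set I : ℕ := ∑ v ∈ P, (L.filter fun f =>
      MvPolynomial.eval (fun j : Fin m => v j.castSucc) f = v (Fin.last m)).card with hI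
  -- swap the double sum
  have hI_swap : I = ∑ f ∈ L, (P.filter fun v =>
      MvPolynomial.eval (fun j : Fin m => v j.castSucc) f = v (Fin.last m)).card := by
    rw [hI]
    simp only [Finset.card_filter]
    exact Finset.sum_comm
  -- expand squares as a sum over pairs of points
  have hsq : ∑ f ∈ L, ((P.filter fun v =>
        MvPolynomial.eval (fun j : Fin m => v j.castSucc) f = v (Fin.last m)).card)^2
      = ∑ p ∈ P ×ˢ P, (L.filter fun f =>
          (MvPolynomial.eval (fun j : Fin m => p.1 j.castSucc) f = p.1 (Fin.last m))
          ∧ (MvPolynomial.eval (fun j : Fin m => p.2 j.castSucc) f = p.2 (Fin.last m))).card := by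
    have hsq1 : ∀ f : MvPolynomial (Fin m) F, ((P.filter fun v =>
        MvPolynomial.eval (fun j : Fin m => v j.castSucc) f = v (Fin.last m)).card)^2
        = ∑ p ∈ P ×ˢ P, (if
          (MvPolynomial.eval (fun j : Fin m => p.1 j.castSucc) f = p.1 (Fin.last m))
          ∧ (MvPolynomial.eval (fun j : Fin m => p.2 j.castSucc) f = p.2 (Fin.last m))
          then 1 else 0) := by
      intro f
      rw [Finset.card_filter, sq, Finset.sum_mul_sum, ← Finset.sum_product']
      refine Finset.sum_congr rfl fun p _ => ?_
      split_ifs with h1 h2 h3 <;> simp_all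
    calc ∑ f ∈ L, ((P.filter fun v =>
          MvPolynomial.eval (fun j : Fin m => v j.castSucc) f = v (Fin.last m)).card)^2
        = ∑ f ∈ L, ∑ p ∈ P ×ˢ P, (if
            (MvPolynomial.eval (fun j : Fin m => p.1 j.castSucc) f = p.1 (Fin.last m))
            ∧ (MvPolynomial.eval (fun j : Fin m => p.2 j.castSucc) f = p.2 (Fin.last m))
            then 1 else 0) := Finset.sum_congr rfl fun f _ => hsq1 f
      _ = ∑ p ∈ P ×ˢ P, ∑ f ∈ L, (if
            (MvPolynomial.eval (fun j : Fin m => p.1 j.castSucc) f = p.1 (Fin.last m))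
            ∧ (MvPolynomial.eval (fun j : Fin m => p.2 j.castSucc) f = p.2 (Fin.last m))
            then 1 else 0) := Finset.sum_comm
      _ = ∑ p ∈ P ×ˢ P, (L.filter fun f =>
            (MvPolynomial.eval (fun j : Fin m => p.1 j.castSucc) f = p.1 (Fin.last m))
            ∧ (MvPolynomial.eval (fun j : Fin m => p.2 j.castSucc) f = p.2 (Fin.last m))).card :=
          Finset.sum_congr rfl fun p _ => (Finset.card_filter _ _).symm
  -- split into diagonal and off-diagonal
  have hsplit : ∑ p ∈ P ×ˢ P, (L.filter fun f =>
        (MvPolynomial.eval (fun j : Fin m => p.1 j.castSucc) f = p.1 (Fin.last m))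
        ∧ (MvPolynomial.eval (fun j : Fin m => p.2 j.castSucc) f = p.2 (Fin.last m))).card
      = (∑ p ∈ (P ×ˢ P).filter (fun p => p.1 = p.2), (L.filter fun f =>
        (MvPolynomial.eval (fun j : Fin m => p.1 j.castSucc) f = p.1 (Fin.last m))
        ∧ (MvPolynomial.eval (fun j : Fin m => p.2 j.castSucc) f = p.2 (Fin.last m))).card)
      + ∑ p ∈ (P ×ˢ P).filter (fun p => ¬ p.1 = p.2), (L.filter fun f =>
        (MvPolynomial.eval (fun j : Fin m => p.1 j.castSucc) f = p.1 (Fin.last m))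
        ∧ (MvPolynomial.eval (fun j : Fin m => p.2 j.castSucc) f = p.2 (Fin.last m))).card :=
    (Finset.sum_filter_add_sum_filter_not _ _ _).symm
  have hdiag : ∑ p ∈ (P ×ˢ P).filter (fun p => p.1 = p.2), (L.filter fun f =>
        (MvPolynomial.eval (fun j : Fin m => p.1 j.castSucc) f = p.1 (Fin.last m))
        ∧ (MvPolynomial.eval (fun j : Fin m => p.2 j.castSucc) f = p.2 (Fin.last m))).card
      = I := by
    rw [hI]
    refine Finset.sum_nbij' (fun p => p.1) (fun v => (v, v)) ?_ ?_ ?_ ?_ ?_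
    · intro p hp
      simp only [Finset.mem_filter, Finset.mem_product] at hp
      exact hp.1.1
    · intro v hv
      simp only [Finset.mem_filter, Finset.mem_product]
      exact ⟨⟨hv, hv⟩, trivial⟩
    · intro p hp
      simp only [Finset.mem_filter, Finset.mem_product] at hp
      exact Prod.ext rfl hp.2
    · intro v _
      rfl
    · intro p hp
      simp only [Finset.mem_filter, Finset.mem_product] at hp
      rw [← hp.2]
      simp
  -- real number setup
  set Q : ℝ := (q : ℝ) with hQ
  have hQ0 : (0:ℝ) < Q := by
    rw [hQ]; exact_mod_cast Nat.lt_of_lt_of_le Nat.zero_lt_one hq1.le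
  have hoff : ∀ p ∈ (P ×ˢ P).filter (fun p : (Fin (m+1) → F) × (Fin (m+1) → F) => ¬ p.1 = p.2),
      (((L.filter fun f =>
        (MvPolynomial.eval (fun j : Fin m => p.1 j.castSucc) f = p.1 (Fin.last m))
        ∧ (MvPolynomial.eval (fun j : Fin m => p.2 j.castSucc) f = p.2 (Fin.last m))).card : ℕ) : ℝ)
        ≤ Q ^ ((n:ℝ) - 2) := by
    intro p hp
    simp only [Finset.mem_filter, Finset.mem_product] at hp
    have hb := pair_bound hr L hL p.1 p.2 hp.2
    have hb' : (((L.filter fun f =>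
        (MvPolynomial.eval (fun j : Fin m => p.1 j.castSucc) f = p.1 (Fin.last m))
        ∧ (MvPolynomial.eval (fun j : Fin m => p.2 j.castSucc) f = p.2 (Fin.last m))).card : ℕ) : ℝ)
        * Q^(2:ℕ) ≤ Q^(n:ℕ) := by
      rw [hQ]
      exact_mod_cast hb
    have h2 : Q ^ ((n:ℝ) - 2) = Q^(n:ℕ) / Q^(2:ℕ) := by
      rw [Real.rpow_sub hQ0, Real.rpow_natCast]
      norm_num
    rw [h2, le_div_iff₀ (by positivity)]
    exact hb'
  set Noff : ℕ := ∑ p ∈ (P ×ˢ P).filter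
      (fun p : (Fin (m+1) → F) × (Fin (m+1) → F) => ¬ p.1 = p.2), (L.filter fun f =>
        (MvPolynomial.eval (fun j : Fin m => p.1 j.castSucc) f = p.1 (Fin.last m))
        ∧ (MvPolynomial.eval (fun j : Fin m => p.2 j.castSucc) f = p.2 (Fin.last m))).card
    with hNoff
  have hoffsum : ((Noff : ℕ) : ℝ) ≤ (P.card:ℝ)^2 * Q ^ ((n:ℝ) - 2) := by
    rw [hNoff]
    push_cast
    calc ∑ p ∈ ((P ×ˢ P).filter
        (fun p : (Fin (m+1) → F) × (Fin (m+1) → F) => ¬ p.1 = p.2)), (((L.filter fun f =>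
          (MvPolynomial.eval (fun j : Fin m => p.1 j.castSucc) f = p.1 (Fin.last m))
          ∧ (MvPolynomial.eval (fun j : Fin m => p.2 j.castSucc) f = p.2 (Fin.last m))).card : ℕ)
          : ℝ)
        ≤ ∑ p ∈ ((P ×ˢ P).filter
          (fun p : (Fin (m+1) → F) × (Fin (m+1) → F) => ¬ p.1 = p.2)), Q ^ ((n:ℝ) - 2) :=
          Finset.sum_le_sum hoff
      _ = (((P ×ˢ P).filter
          (fun p : (Fin (m+1) → F) × (Fin (m+1) → F) => ¬ p.1 = p.2)).card : ℝ)
            * Q ^ ((n:ℝ) - 2) := by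
          rw [Finset.sum_const, nsmul_eq_mul]
      _ ≤ (P.card:ℝ)^2 * Q ^ ((n:ℝ) - 2) := by
          have hc : ((P ×ˢ P).filter
              (fun p : (Fin (m+1) → F) × (Fin (m+1) → F) => ¬ p.1 = p.2)).card
              ≤ P.card^2 := by
            calc _ ≤ (P ×ˢ P).card := Finset.card_filter_le _ _
              _ = P.card^2 := by rw [Finset.card_product, sq]
          have : (0:ℝ) ≤ Q ^ ((n:ℝ) - 2) := by positivity
          have hc' : (((P ×ˢ P).filter
              (fun p : (Fin (m+1) → F) × (Fin (m+1) → F) => ¬ p.1 = p.2)).card : ℝ)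
              ≤ (P.card:ℝ)^2 := by exact_mod_cast hc
          exact mul_le_mul_of_nonneg_right hc' this
  have htot : ∑ f ∈ L, ((P.filter fun v =>
      MvPolynomial.eval (fun j : Fin m => v j.castSucc) f = v (Fin.last m)).card)^2
      = I + Noff := by
    rw [hsq, hsplit, hdiag, hNoff]
  have hCS : ((I:ℕ):ℝ)^2 ≤ (L.card:ℝ) * ((I + Noff : ℕ) : ℝ) := by
    rw [← htot]
    push_cast
    rw [hI_swap]
    push_cast
    exact sq_sum_le_card_mul_sum_sq
  have hQe : (Q ^ ((n:ℝ)/2 - 1))^2 = Q ^ ((n:ℝ) - 2) := by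
    rw [sq, ← Real.rpow_add hQ0]
    congr 1
    ring
  have hB0 : (0:ℝ) ≤ Q ^ ((n:ℝ)/2 - 1) * (P.card:ℝ) * Real.sqrt (L.card:ℝ) := by positivity
  have hBsq : (Q ^ ((n:ℝ)/2 - 1) * (P.card:ℝ) * Real.sqrt (L.card:ℝ))^2
      = (L.card:ℝ) * ((P.card:ℝ)^2 * Q ^ ((n:ℝ) - 2)) := by
    rw [mul_pow, mul_pow, hQe, Real.sq_sqrt (by positivity)]
    ring
  show ((I:ℕ):ℝ) ≤ (L.card:ℝ) + Q ^ ((n:ℝ)/2 - 1) * (P.card:ℝ) * Real.sqrt (L.card:ℝ)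
  set B : ℝ := Q ^ ((n:ℝ)/2 - 1) * (P.card:ℝ) * Real.sqrt (L.card:ℝ) with hBdef
  set X : ℝ := (P.card:ℝ)^2 * Q ^ ((n:ℝ) - 2) with hX
  have hI0 : (0:ℝ) ≤ ((I:ℕ):ℝ) := Nat.cast_nonneg _
  have hL0 : (0:ℝ) ≤ (L.card:ℝ) := Nat.cast_nonneg _
  have key : ((I:ℕ):ℝ)^2 ≤ (L.card:ℝ) * ((I:ℕ):ℝ) + B^2 := by
    have h1 : ((I + Noff : ℕ):ℝ) = ((I:ℕ):ℝ) + ((Noff:ℕ):ℝ) := by push_cast; ring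
    have h2 : (L.card:ℝ) * ((I + Noff : ℕ):ℝ) ≤ (L.card:ℝ) * (((I:ℕ):ℝ) + X) := by
      apply mul_le_mul_of_nonneg_left _ hL0
      rw [h1]
      exact add_le_add_right hoffsum _
    calc ((I:ℕ):ℝ)^2 ≤ (L.card:ℝ) * ((I + Noff : ℕ) : ℝ) := hCS
      _ ≤ (L.card:ℝ) * (((I:ℕ):ℝ) + X) := h2
      _ = (L.card:ℝ) * ((I:ℕ):ℝ) + B^2 := by rw [hBsq, hX]; ring
  by_contra hcon
  push_neg at hcon
  nlinarith [mul_nonneg hB0 hL0, mul_nonneg hI0 hB0, sq_nonneg (((I:ℕ):ℝ) - (L.card:ℝ) - B),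
    mul_nonneg hI0 hL0]
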